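/- arXiv:1808.03929 — 3 statements merged into one kernel-verified Lean document; each statement's English description precedes it below -/
import Mathlib

section
/- Fix a state-measure flow 𝛍. For all n ≥ k ≥ 0, the finite-horizon optimal value function J_k^n(·, λβ^k) is continuous and bounded on 𝖷 with sup-norm at most e^{λK ζ_{k,n}}, where ζ_{k,n} = Σ_{t=k}^n β^t < 1/(1−β); moreover it satisfies the backward recursion J_n^n(x, λβ^n) = inf_{a∈𝖠} e^{λβ^n c_n(x,a)} and J_k^n(x, λβ^k) = inf_{a∈𝖠} [e^{λβ^k c_k(x,a)} ∫_𝖷 J_{k+1}^n(y, λβ^{k+1}) p_k(dy|x,a)] for k < n. -/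
open MeasureTheory ProbabilityTheory Filter Topology
open scoped ENNReal

namespace RSMFG

variable {X A : Type*} [MeasurableSpace X] [MeasurableSpace A]

/-- Histories of length `t` for the single-agent problem: past state-action pairs and the
current state. -/
abbrev Hist (X A : Type*) (t : ℕ) : Type _ := (Fin t → X × A) × X

/-- Extending a history by an action and a next state. -/
def extHist {t : ℕ} (h : Hist X A t) (a : A) (y : X) : Hist X A (t + 1) :=
  (Fin.snoc h.1 (h.2, a), y)

/-- A (history-dependent, randomized) policy. -/
abbrev Pol (X A : Type*) [MeasurableSpace X] [MeasurableSpace A] :=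
  {π : (t : ℕ) → Kernel (Hist X A t) A // ∀ t, IsMarkovKernel (π t)}

/-- A Markov (randomized) policy. -/
abbrev MPol (X A : Type*) [MeasurableSpace X] [MeasurableSpace A] :=
  {π : ℕ → Kernel X A // ∀ t, IsMarkovKernel (π t)}

/-- A Markov policy regarded as a history-dependent policy. -/
def toPol (π : ℕ → Kernel X A) (t : ℕ) : Kernel (Hist X A t) A :=
  (π t).comap Prod.snd measurable_snd

/-- The law of the history up to time `t` (Ionescu–Tulcea finite-dimensional law):
`x(0) ∼ μ₀`, `a(t) ∼ π_t(·|history)`, `x(t+1) ∼ p_t(·|x(t),a(t))`. -/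
noncomputable def traj (μ₀ : Measure X) (pk : ℕ → X → A → Measure X)
    (π : (t : ℕ) → Kernel (Hist X A t) A) : (t : ℕ) → Measure (Hist X A t)
  | 0 => μ₀.map fun x => (fun i => i.elim0, x)
  | t + 1 => (traj μ₀ pk π t).bind fun h =>
      ((π t) h).bind fun a => (pk t h.2 a).map (extHist h a)

/-- Finite-horizon risk-sensitive cost `E[exp(λ Σ_{t=0}^n β^t c_t(x(t),a(t)))]`. -/
noncomputable def Jfin (lam β : ℝ) (cst : ℕ → X → A → ℝ) (μ₀ : Measure X)
    (pk : ℕ → X → A → Measure X) (π : (t : ℕ) → Kernel (Hist X A t) A) (n : ℕ) : ℝ :=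
  ∫ h, Real.exp (lam * ∑ i : Fin (n + 1), β ^ (i : ℕ) * cst i (h.1 i).1 (h.1 i).2)
    ∂(traj μ₀ pk π (n + 1))

/-- Infinite-horizon risk-sensitive cost `E[exp(λ Σ_{t=0}^∞ β^t c_t(x(t),a(t)))]`
(monotone limit of the finite-horizon costs, since the one-stage costs are nonnegative). -/
noncomputable def Jinf (lam β : ℝ) (cst : ℕ → X → A → ℝ) (μ₀ : Measure X)
    (pk : ℕ → X → A → Measure X) (π : (t : ℕ) → Kernel (Hist X A t) A) : ℝ :=
  ⨆ n, Jfin lam β cst μ₀ pk π n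

/-- The law of the state `x(t)` under a policy. -/
noncomputable def stateLaw (μ₀ : Measure X) (pk : ℕ → X → A → Measure X)
    (π : (t : ℕ) → Kernel (Hist X A t) A) (t : ℕ) : Measure X :=
  (traj μ₀ pk π t).map Prod.snd

/-- Finite-horizon conditional risk-sensitive cost of a Markov policy:
`Vfin β cst pk π m k γ x = E^π[exp(γ Σ_{t=k}^{k+m} β^{t−k} c_t(x(t),a(t))) | x(k) = x]`,
defined through the (exact) multiplicative dynamic-programming recursion. -/
noncomputable def Vfin (β : ℝ) (cst : ℕ → X → A → ℝ) (pk : ℕ → X → A → Measure X)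
    (π : ℕ → Kernel X A) : ℕ → ℕ → ℝ → X → ℝ
  | 0, k, γ, x => ∫ a, Real.exp (γ * cst k x a) ∂((π k) x)
  | m + 1, k, γ, x => ∫ a, Real.exp (γ * cst k x a) *
      ∫ y, Vfin β cst pk π m (k + 1) (γ * β) y ∂(pk k x a) ∂((π k) x)

/-- Infinite-horizon conditional risk-sensitive cost of a Markov policy
`J_k(π,x,γ) = E^π[exp(γ Σ_{t=k}^{∞} β^{t−k} c_t(x(t),a(t))) | x(k) = x]`. -/
noncomputable def Vinf (β : ℝ) (cst : ℕ → X → A → ℝ) (pk : ℕ → X → A → Measure X)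
    (π : ℕ → Kernel X A) (k : ℕ) (γ : ℝ) (x : X) : ℝ :=
  ⨆ m, Vfin β cst pk π m k γ x

/-- The optimal finite-horizon (horizon `n`) risk-sensitive value function at time `k`:
`J_k^n(x, λβ^k) = inf over Markov policies of E^π[exp(λβ^k Σ_{t=k}^n β^{t−k} c_t)|x(k)=x]`. -/
noncomputable def JoptFin (β lam : ℝ) (cst : ℕ → X → A → ℝ)
    (pk : ℕ → X → A → Measure X) (k n : ℕ) (x : X) : ℝ :=
  ⨅ π : MPol X A, Vfin β cst pk π.1 (n - k) k (lam * β ^ k) x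

end RSMFG

set_option linter.unusedSectionVars false
set_option linter.unusedVariables false
set_option maxHeartbeats 1000000

namespace RSMFGaux

variable {X A : Type*} [TopologicalSpace X] [PolishSpace X] [MeasurableSpace X] [BorelSpace X]
  [MetricSpace A] [CompactSpace A] [Nonempty A] [MeasurableSpace A] [BorelSpace A]
  [SecondCountableTopology A]

lemma real_le_of_forall_pos_le_add {a b : ℝ} (h : ∀ ε : ℝ, 0 < ε → a ≤ b + ε) : a ≤ b := by
  by_contra hc
  push_neg at hc
  have := h ((a - b) / 2) (by linarith)
  linarith

lemma continuous_iInf_compact {f : X × A → ℝ} (hf : Continuous f) (h0 : ∀ q, 0 ≤ f q) :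
    Continuous fun x => ⨅ a, f (x, a) := by
  have hbb : ∀ x : X, BddBelow (Set.range fun a => f (x, a)) := fun x =>
    ⟨0, by rintro y ⟨a, rfl⟩; exact h0 _⟩
  rw [continuous_iff_continuousAt]
  intro x₀
  rw [ContinuousAt, tendsto_order]
  constructor
  · intro b hb
    obtain ⟨b', hbb', hb'⟩ := exists_between hb
    have hsub : ({x₀} : Set X) ×ˢ (Set.univ : Set A) ⊆ f ⁻¹' Set.Ioi b' := by
      rintro ⟨x, a⟩ ⟨hx, -⟩
      rw [show x = x₀ from hx]
      exact lt_of_lt_of_le hb' (ciInf_le (hbb x₀) a)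
    obtain ⟨u, v, hu, hv, hx₀u, hvuniv, huv⟩ :=
      generalized_tube_lemma isCompact_singleton isCompact_univ
        (hf.isOpen_preimage _ isOpen_Ioi) hsub
    filter_upwards [hu.mem_nhds (hx₀u rfl)] with x hx
    refine lt_of_lt_of_le hbb' (le_ciInf fun a => le_of_lt ?_)
    exact huv (Set.mem_prod.mpr ⟨hx, hvuniv trivial⟩)
  · intro b hb
    obtain ⟨a₀, ha₀⟩ := exists_lt_of_ciInf_lt hb
    have hcx : Continuous fun x => f (x, a₀) := hf.comp (continuous_id.prodMk continuous_const)
    filter_upwards [(hcx.isOpen_preimage _ isOpen_Iio).mem_nhds ha₀] with x hx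
    exact lt_of_le_of_lt (ciInf_le (hbb x) a₀) hx

lemma measurable_toMeasure_comp {Z : Type*} [TopologicalSpace Z] [MeasurableSpace Z]
    [OpensMeasurableSpace Z] {g : Z → ProbabilityMeasure X} (hg : Continuous g) :
    Measurable fun z => (g z : Measure X) := by
  letI := TopologicalSpace.upgradeIsCompletelyMetrizable X
  apply Measure.measurable_of_measurable_coe
  intro s hs
  refine MeasurableSpace.induction_on_inter (C := fun s _ => Measurable fun z => (g z : Measure X) s)
    BorelSpace.measurable_eq isPiSystem_isOpen ?_ ?_ ?_ ?_ s hs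
  · simp only [measure_empty]
    exact measurable_const
  · intro t ht
    have lsc : LowerSemicontinuous fun z => ((g z : Measure X) t) := by
      intro z₀ y hy
      have hlim : ((g z₀ : Measure X) t) ≤ Filter.liminf (fun z => (g z : Measure X) t) (𝓝 z₀) :=
        ProbabilityMeasure.le_liminf_measure_open_of_tendsto (hg.tendsto z₀) ht
      exact Filter.eventually_lt_of_lt_liminf (lt_of_lt_of_le hy hlim)
    exact lsc.measurable
  · intro t htm hC
    have : ∀ z, (g z : Measure X) tᶜ = 1 - (g z : Measure X) t := fun z => by
      rw [measure_compl htm (measure_ne_top _ t)]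
      simp [measure_univ]
    simp_rw [this]
    exact measurable_const.sub hC
  · intro f hd hm hC
    simp_rw [measure_iUnion hd hm]
    exact Measurable.ennreal_tsum hC

/-- The kernel associated with a continuous family of probability measures. -/
noncomputable def pker {Z : Type*} [TopologicalSpace Z] [MeasurableSpace Z]
    [OpensMeasurableSpace Z] (g : Z → ProbabilityMeasure X) (hg : Continuous g) : Kernel Z X :=
  ⟨fun z => (g z : Measure X), measurable_toMeasure_comp hg⟩

@[simp] lemma pker_apply {Z : Type*} [TopologicalSpace Z] [MeasurableSpace Z]
    [OpensMeasurableSpace Z] (g : Z → ProbabilityMeasure X) (hg : Continuous g) (z : Z) :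
    pker g hg z = (g z : Measure X) := rfl

instance {Z : Type*} [TopologicalSpace Z] [MeasurableSpace Z] [OpensMeasurableSpace Z]
    (g : Z → ProbabilityMeasure X) (hg : Continuous g) : IsMarkovKernel (pker g hg) :=
  ⟨fun z => by rw [pker_apply]; infer_instance⟩

lemma continuous_integral_prob {Z : Type*} [TopologicalSpace Z] {g : Z → ProbabilityMeasure X}
    (hg : Continuous g) {f : X → ℝ} (hf : Continuous f) {C : ℝ} (hC : ∀ x, |f x| ≤ C) :
    Continuous fun z => ∫ y, f y ∂(g z : Measure X) := by
  let f' : BoundedContinuousFunction X ℝ :=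
    BoundedContinuousFunction.ofNormedAddCommGroup f hf C (fun x => by
      simpa [Real.norm_eq_abs] using hC x)
  have h1 : Continuous fun μ : ProbabilityMeasure X => ∫ y, f' y ∂(μ : Measure X) :=
    ProbabilityMeasure.continuous_integral_boundedContinuousFunction f'
  exact h1.comp hg

lemma measurable_integral_kernel {Z : Type*} [MeasurableSpace Z] (κ : Kernel Z X)
    [IsSFiniteKernel κ] {h : X → ℝ} (hh : Measurable h) :
    Measurable fun z => ∫ y, h y ∂κ z :=
  (StronglyMeasurable.integral_kernel_prod_right'
    ((hh.stronglyMeasurable.comp_measurable measurable_snd :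
      StronglyMeasurable fun q : Z × X => h q.2))).measurable

lemma integrable_of_bounds {α : Type*} [MeasurableSpace α] {μ : Measure α} [IsFiniteMeasure μ]
    {g : α → ℝ} (hm : AEStronglyMeasurable g μ) {C : ℝ} (hb : ∀ x, |g x| ≤ C) :
    Integrable g μ :=
  Integrable.mono' (integrable_const C) hm
    (Filter.Eventually.of_forall fun x => by simpa [Real.norm_eq_abs] using hb x)

lemma exists_selector {f : X × A → ℝ} (hf : Continuous f) (h0 : ∀ q, 0 ≤ f q) {ε : ℝ}
    (hε : 0 < ε) : ∃ σ : X → A, Measurable σ ∧ ∀ x, f (x, σ x) ≤ (⨅ a, f (x, a)) + ε := by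
  classical
  have hbb : ∀ x : X, BddBelow (Set.range fun a => f (x, a)) := fun x =>
    ⟨0, by rintro y ⟨a, rfl⟩; exact h0 _⟩
  set D : ℕ → A := TopologicalSpace.denseSeq A with hD
  have hDd : DenseRange D := TopologicalSpace.denseRange_denseSeq A
  have hbbD : ∀ x : X, BddBelow (Set.range fun i => f (x, D i)) := fun x =>
    ⟨0, by rintro y ⟨i, rfl⟩; exact h0 _⟩
  have hdi : ∀ x, (⨅ i, f (x, D i)) = ⨅ a, f (x, a) := by
    intro x
    refine le_antisymm (le_ciInf fun a => ?_) (le_ciInf fun i => ciInf_le (hbb x) (D i))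
    by_contra h
    push_neg at h
    have hU : IsOpen {b : A | f (x, b) < ⨅ i, f (x, D i)} :=
      isOpen_lt (hf.comp (continuous_const.prodMk continuous_id)) continuous_const
    obtain ⟨i, hi⟩ := hDd.exists_mem_open hU ⟨a, h⟩
    exact absurd hi (not_lt.mpr (ciInf_le (hbbD x) i))
  have key : ∀ x, ∃ i, f (x, D i) < (⨅ a, f (x, a)) + ε := by
    intro x
    have : (⨅ i, f (x, D i)) < (⨅ a, f (x, a)) + ε := by
      rw [hdi x]; exact lt_add_of_pos_right _ hε
    exact exists_lt_of_ciInf_lt this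
  have hg : Continuous fun x => ⨅ a, f (x, a) := continuous_iInf_compact hf h0
  have hmeas : ∀ i, MeasurableSet {x : X | f (x, D i) < (⨅ a, f (x, a)) + ε} := by
    intro i
    exact (isOpen_lt (hf.comp (continuous_id.prodMk continuous_const))
      (hg.add continuous_const)).measurableSet
  refine ⟨fun x => D (Nat.find (key x)), (measurable_from_top).comp (measurable_find _ hmeas), ?_⟩
  intro x
  exact le_of_lt (Nat.find_spec (key x))

end RSMFGaux

namespace RSMFG

variable {X A : Type*} [MeasurableSpace X] [MeasurableSpace A]

section Main

variable {X A : Type*} [TopologicalSpace X] [PolishSpace X] [MeasurableSpace X] [BorelSpace X]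
  [MetricSpace A] [CompactSpace A] [Nonempty A] [MeasurableSpace A] [BorelSpace A]
  [SecondCountableTopology A]

variable (β lam : ℝ) (cst : ℕ → X → A → ℝ) (P : ℕ → X → A → ProbabilityMeasure X)

/-- The optimal value function defined by backward recursion. -/
noncomputable def W : ℕ → ℕ → X → ℝ
  | 0, k, x => ⨅ a : A, Real.exp (lam * β ^ k * cst k x a)
  | m + 1, k, x => ⨅ a : A, Real.exp (lam * β ^ k * cst k x a) *
      ∫ y, W m (k + 1) y ∂(P k x a : Measure X)

variable {β lam cst P}

lemma Vfin_zero' (pk : ℕ → X → A → Measure X) (π : ℕ → Kernel X A) (k : ℕ) (γ : ℝ) (x : X) :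
    Vfin β cst pk π 0 k γ x = ∫ a, Real.exp (γ * cst k x a) ∂((π k) x) := rfl

lemma Vfin_succ' (pk : ℕ → X → A → Measure X) (π : ℕ → Kernel X A) (m k : ℕ) (γ : ℝ) (x : X) :
    Vfin β cst pk π (m + 1) k γ x = ∫ a, Real.exp (γ * cst k x a) *
      ∫ y, Vfin β cst pk π m (k + 1) (γ * β) y ∂(pk k x a) ∂((π k) x) := rfl

lemma W_zero' (k : ℕ) (x : X) :
    W β lam cst P 0 k x = ⨅ a : A, Real.exp (lam * β ^ k * cst k x a) := rfl

lemma W_succ' (m k : ℕ) (x : X) :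
    W β lam cst P (m + 1) k x = ⨅ a : A, Real.exp (lam * β ^ k * cst k x a) *
      ∫ y, W β lam cst P m (k + 1) y ∂(P k x a : Measure X) := rfl

lemma W_spec {K : ℝ} (hβ0 : 0 < β) (hlam : 0 < lam) (hK : 0 ≤ K)
    (hccst : ∀ t, Continuous fun q : X × A => cst t q.1 q.2)
    (hcst0 : ∀ t x a, 0 ≤ cst t x a) (hcstK : ∀ t x a, cst t x a ≤ K)
    (hP : ∀ t, Continuous fun q : X × A => P t q.1 q.2) :
    ∀ m k, Continuous (W β lam cst P m k) ∧
      ∀ x, 0 ≤ W β lam cst P m k x ∧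
        W β lam cst P m k x ≤ Real.exp (lam * K * ∑ j ∈ Finset.range (m + 1), β ^ (k + j)) := by
  intro m
  induction m with
  | zero =>
    intro k
    have hfc : Continuous fun q : X × A => Real.exp (lam * β ^ k * cst k q.1 q.2) :=
      Real.continuous_exp.comp (continuous_const.mul (hccst k))
    have hf0 : ∀ q : X × A, 0 ≤ Real.exp (lam * β ^ k * cst k q.1 q.2) :=
      fun q => (Real.exp_pos _).le
    have hcont : Continuous (W β lam cst P 0 k) := by
      have := RSMFGaux.continuous_iInf_compact hfc hf0
      exact this
    refine ⟨hcont, fun x => ?_⟩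
    refine ⟨le_ciInf fun a => (Real.exp_pos _).le, ?_⟩
    have h1 : W β lam cst P 0 k x ≤ Real.exp (lam * β ^ k * cst k x (Classical.arbitrary A)) :=
      ciInf_le ⟨0, by rintro y ⟨a, rfl⟩; exact (Real.exp_pos _).le⟩ _
    have hsum : ∑ j ∈ Finset.range 1, β ^ (k + j) = β ^ k := by simp
    rw [hsum]
    refine h1.trans (Real.exp_le_exp.mpr ?_)
    refine le_trans (mul_le_mul_of_nonneg_left (hcstK k x _) (by positivity)) (le_of_eq (by ring))
  | succ m ih =>
    intro k
    obtain ⟨hWc, hWb⟩ := ih (k + 1)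
    set B := Real.exp (lam * K * ∑ j ∈ Finset.range (m + 1), β ^ (k + 1 + j)) with hB
    have hWabs : ∀ y, |W β lam cst P m (k + 1) y| ≤ B := fun y => by
      rw [abs_of_nonneg (hWb y).1]; exact (hWb y).2
    have hint : Continuous fun q : X × A =>
        ∫ y, W β lam cst P m (k + 1) y ∂(P k q.1 q.2 : Measure X) :=
      RSMFGaux.continuous_integral_prob (hP k) hWc hWabs
    have hfc : Continuous fun q : X × A => Real.exp (lam * β ^ k * cst k q.1 q.2) *
        ∫ y, W β lam cst P m (k + 1) y ∂(P k q.1 q.2 : Measure X) :=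
      (Real.continuous_exp.comp (continuous_const.mul (hccst k))).mul hint
    have hf0 : ∀ q : X × A, 0 ≤ Real.exp (lam * β ^ k * cst k q.1 q.2) *
        ∫ y, W β lam cst P m (k + 1) y ∂(P k q.1 q.2 : Measure X) :=
      fun q => mul_nonneg (Real.exp_pos _).le (integral_nonneg fun y => (hWb y).1)
    have hcont : Continuous (W β lam cst P (m + 1) k) := by
      have := RSMFGaux.continuous_iInf_compact hfc hf0
      exact this
    refine ⟨hcont, fun x => ?_⟩
    refine ⟨le_ciInf fun a => hf0 (x, a), ?_⟩
    set a₀ := Classical.arbitrary A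
    have h1 : W β lam cst P (m + 1) k x ≤ Real.exp (lam * β ^ k * cst k x a₀) *
        ∫ y, W β lam cst P m (k + 1) y ∂(P k x a₀ : Measure X) :=
      ciInf_le ⟨0, by rintro y ⟨a, rfl⟩; exact hf0 (x, a)⟩ a₀
    have hintg : Integrable (W β lam cst P m (k + 1)) (P k x a₀ : Measure X) :=
      RSMFGaux.integrable_of_bounds hWc.aestronglyMeasurable hWabs
    have h2 : ∫ y, W β lam cst P m (k + 1) y ∂(P k x a₀ : Measure X) ≤ B := by
      calc ∫ y, W β lam cst P m (k + 1) y ∂(P k x a₀ : Measure X)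
          ≤ ∫ _y, B ∂(P k x a₀ : Measure X) :=
            integral_mono hintg (integrable_const _) fun y => (hWb y).2
        _ = B := by simp
    have h3 : Real.exp (lam * β ^ k * cst k x a₀) ≤ Real.exp (lam * K * β ^ k) :=
      Real.exp_le_exp.mpr
        (le_trans (mul_le_mul_of_nonneg_left (hcstK k x a₀) (by positivity)) (le_of_eq (by ring)))
    have h4 : Real.exp (lam * β ^ k * cst k x a₀) *
        (∫ y, W β lam cst P m (k + 1) y ∂(P k x a₀ : Measure X)) ≤ Real.exp (lam * K * β ^ k) * B :=
      mul_le_mul h3 h2 (integral_nonneg fun y => (hWb y).1) (Real.exp_pos _).le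
    refine (h1.trans h4).trans_eq ?_
    rw [hB, ← Real.exp_add]
    congr 1
    have hsum : ∑ j ∈ Finset.range (m + 1 + 1), β ^ (k + j)
        = β ^ k + ∑ j ∈ Finset.range (m + 1), β ^ (k + 1 + j) := by
      rw [Finset.sum_range_succ']
      simp only [Nat.add_zero]
      rw [add_comm]
      congr 1
      exact Finset.sum_congr rfl fun j _ => by rw [show k + (j + 1) = k + 1 + j from by omega]
    rw [hsum]
    ring

lemma Vfin_congr (pk : ℕ → X → A → Measure X) {π π' : ℕ → Kernel X A} :
    ∀ m k, (∀ t, k ≤ t → π t = π' t) → ∀ γ,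
      Vfin β cst pk π m k γ = Vfin β cst pk π' m k γ := by
  intro m
  induction m with
  | zero =>
    intro k h γ
    funext x
    rw [Vfin_zero', Vfin_zero', h k le_rfl]
  | succ m ih =>
    intro k h γ
    funext x
    rw [Vfin_succ', Vfin_succ', h k le_rfl, ih (k + 1) (fun t ht => h t (by omega)) (γ * β)]

lemma Vfin_nonneg (pk : ℕ → X → A → Measure X) (π : ℕ → Kernel X A) :
    ∀ m k γ x, 0 ≤ Vfin β cst pk π m k γ x := by
  intro m
  induction m with
  | zero =>
    intro k γ x
    rw [Vfin_zero']
    exact integral_nonneg fun a => (Real.exp_pos _).le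
  | succ m ih =>
    intro k γ x
    rw [Vfin_succ']
    exact integral_nonneg fun a =>
      mul_nonneg (Real.exp_pos _).le (integral_nonneg fun y => ih (k + 1) (γ * β) y)

lemma Vfin_meas (hccst : ∀ t, Continuous fun q : X × A => cst t q.1 q.2)
    (hP : ∀ t, Continuous fun q : X × A => P t q.1 q.2)
    {π : ℕ → Kernel X A} (hπ : ∀ t, IsMarkovKernel (π t)) :
    ∀ m k γ, Measurable (Vfin β cst (fun t x a => (P t x a : Measure X)) π m k γ) := by
  intro m
  induction m with
  | zero =>
    intro k γ
    haveI := hπ k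
    have hf : StronglyMeasurable fun q : X × A => Real.exp (γ * cst k q.1 q.2) :=
      (Real.continuous_exp.comp (continuous_const.mul (hccst k))).stronglyMeasurable
    exact hf.integral_kernel_prod_right'.measurable
  | succ m ih =>
    intro k γ
    haveI := hπ k
    have hin : Measurable fun q : X × A =>
        ∫ y, Vfin β cst (fun t x a => (P t x a : Measure X)) π m (k + 1) (γ * β) y
          ∂(P k q.1 q.2 : Measure X) := by
      have := RSMFGaux.measurable_integral_kernel
        (RSMFGaux.pker (fun q : X × A => P k q.1 q.2)
          (hP k)) (ih (k + 1) (γ * β))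
      exact this
    have hf : StronglyMeasurable fun q : X × A => Real.exp (γ * cst k q.1 q.2) *
        ∫ y, Vfin β cst (fun t x a => (P t x a : Measure X)) π m (k + 1) (γ * β) y
          ∂(P k q.1 q.2 : Measure X) :=
      (((Real.continuous_exp.comp (continuous_const.mul (hccst k))).measurable).mul
        hin).stronglyMeasurable
    exact hf.integral_kernel_prod_right'.measurable

lemma Vfin_action_meas (hccst : ∀ t, Continuous fun q : X × A => cst t q.1 q.2)
    (hP : ∀ t, Continuous fun q : X × A => P t q.1 q.2)
    {π : ℕ → Kernel X A} (hπ : ∀ t, IsMarkovKernel (π t)) (m k : ℕ) (γ : ℝ) (x : X) :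
    Measurable fun a : A => Real.exp (γ * cst k x a) *
      ∫ y, Vfin β cst (fun t x a => (P t x a : Measure X)) π m (k + 1) (γ * β) y
        ∂(P k x a : Measure X) := by
  have h1 : Measurable fun a : A => Real.exp (γ * cst k x a) :=
    (Real.continuous_exp.comp
      (continuous_const.mul ((hccst k).comp (continuous_const.prodMk continuous_id)))).measurable
  have h2 : Measurable fun q : X × A =>
      ∫ y, Vfin β cst (fun t x a => (P t x a : Measure X)) π m (k + 1) (γ * β) y
        ∂(P k q.1 q.2 : Measure X) := by
    have := RSMFGaux.measurable_integral_kernel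
      (RSMFGaux.pker (fun q : X × A => P k q.1 q.2) (hP k))
      (Vfin_meas (β := β) hccst hP hπ m (k + 1) (γ * β))
    exact this
  exact h1.mul (h2.comp (measurable_prodMk_left))

lemma integral_le_of_bounds {α : Type*} [MeasurableSpace α] {μ : Measure α}
    [IsProbabilityMeasure μ] {g : α → ℝ} (hm : AEStronglyMeasurable g μ) {C : ℝ}
    (h0 : ∀ x, 0 ≤ g x) (hb : ∀ x, g x ≤ C) : ∫ x, g x ∂μ ≤ C := by
  have hint : Integrable g μ := RSMFGaux.integrable_of_bounds hm
    (C := C) (fun x => by rw [abs_of_nonneg (h0 x)]; exact hb x)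
  calc ∫ x, g x ∂μ ≤ ∫ _x, C ∂μ := integral_mono hint (integrable_const _) hb
    _ = C := by simp

lemma le_integral_of_le {α : Type*} [MeasurableSpace α] {μ : Measure α}
    [IsProbabilityMeasure μ] {g : α → ℝ} (hint : Integrable g μ) {D : ℝ}
    (hx : ∀ x, D ≤ g x) : D ≤ ∫ x, g x ∂μ := by
  calc D = ∫ _x, D ∂μ := by simp
    _ ≤ ∫ x, g x ∂μ := integral_mono (integrable_const _) hint hx

lemma Vfin_le_bound {K : ℝ} (hβ0 : 0 < β) (hK : 0 ≤ K)
    (hccst : ∀ t, Continuous fun q : X × A => cst t q.1 q.2)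
    (hcst0 : ∀ t x a, 0 ≤ cst t x a) (hcstK : ∀ t x a, cst t x a ≤ K)
    (hP : ∀ t, Continuous fun q : X × A => P t q.1 q.2)
    {π : ℕ → Kernel X A} (hπ : ∀ t, IsMarkovKernel (π t)) :
    ∀ m k γ, 0 ≤ γ → ∀ x, Vfin β cst (fun t x a => (P t x a : Measure X)) π m k γ x ≤
      Real.exp (γ * K * ∑ j ∈ Finset.range (m + 1), β ^ j) := by
  intro m
  induction m with
  | zero =>
    intro k γ hγ x
    haveI := hπ k
    rw [Vfin_zero']
    have hb : ∀ a : A, Real.exp (γ * cst k x a) ≤ Real.exp (γ * K) := fun a =>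
      Real.exp_le_exp.mpr (mul_le_mul_of_nonneg_left (hcstK k x a) hγ)
    have := integral_le_of_bounds (μ := (π k) x)
      (g := fun a : A => Real.exp (γ * cst k x a))
      ((Real.continuous_exp.comp (continuous_const.mul
        ((hccst k).comp (continuous_const.prodMk continuous_id)))).measurable).aestronglyMeasurable
      (fun a => (Real.exp_pos _).le) hb
    refine this.trans (le_of_eq ?_)
    congr 1
    simp
  | succ m ih =>
    intro k γ hγ x
    haveI := hπ k
    rw [Vfin_succ']
    set Bn := Real.exp (γ * β * K * ∑ j ∈ Finset.range (m + 1), β ^ j) with hBn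
    have hVb : ∀ y, Vfin β cst (fun t x a => (P t x a : Measure X)) π m (k + 1) (γ * β) y ≤ Bn :=
      fun y => ih (k + 1) (γ * β) (by positivity) y
    have hV0 : ∀ y, 0 ≤ Vfin β cst (fun t x a => (P t x a : Measure X)) π m (k + 1) (γ * β) y :=
      fun y => Vfin_nonneg _ _ _ _ _ _
    have hact : ∀ a : A, Real.exp (γ * cst k x a) *
        (∫ y, Vfin β cst (fun t x a => (P t x a : Measure X)) π m (k + 1) (γ * β) y
          ∂(P k x a : Measure X)) ≤ Real.exp (γ * K) * Bn := by
      intro a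
      have hI : ∫ y, Vfin β cst (fun t x a => (P t x a : Measure X)) π m (k + 1) (γ * β) y
          ∂(P k x a : Measure X) ≤ Bn :=
        integral_le_of_bounds (Vfin_meas hccst hP hπ m (k + 1) (γ * β)).aestronglyMeasurable
          hV0 hVb
      exact mul_le_mul (Real.exp_le_exp.mpr (mul_le_mul_of_nonneg_left (hcstK k x a) hγ)) hI
        (integral_nonneg hV0) (Real.exp_pos _).le
    have hact0 : ∀ a : A, 0 ≤ Real.exp (γ * cst k x a) *
        ∫ y, Vfin β cst (fun t x a => (P t x a : Measure X)) π m (k + 1) (γ * β) y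
          ∂(P k x a : Measure X) :=
      fun a => mul_nonneg (Real.exp_pos _).le (integral_nonneg hV0)
    have := integral_le_of_bounds (μ := (π k) x)
      (Vfin_action_meas hccst hP hπ m k γ x).aestronglyMeasurable hact0 hact
    refine this.trans (le_of_eq ?_)
    rw [← Real.exp_add]
    congr 1
    have hsum : ∑ j ∈ Finset.range (m + 1 + 1), β ^ j
        = 1 + β * ∑ j ∈ Finset.range (m + 1), β ^ j := by
      rw [Finset.sum_range_succ', pow_zero, add_comm]
      congr 1
      rw [Finset.mul_sum]
      exact Finset.sum_congr rfl fun j _ => by ring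
    rw [hsum]
    ring

lemma W_le_Vfin {K : ℝ} (hβ0 : 0 < β) (hlam : 0 < lam) (hK : 0 ≤ K)
    (hccst : ∀ t, Continuous fun q : X × A => cst t q.1 q.2)
    (hcst0 : ∀ t x a, 0 ≤ cst t x a) (hcstK : ∀ t x a, cst t x a ≤ K)
    (hP : ∀ t, Continuous fun q : X × A => P t q.1 q.2)
    {π : ℕ → Kernel X A} (hπ : ∀ t, IsMarkovKernel (π t)) :
    ∀ m k x, W β lam cst P m k x ≤
      Vfin β cst (fun t x a => (P t x a : Measure X)) π m k (lam * β ^ k) x := by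
  intro m
  induction m with
  | zero =>
    intro k x
    haveI := hπ k
    rw [Vfin_zero']
    refine le_integral_of_le ?_ ?_
    · refine RSMFGaux.integrable_of_bounds
        ((Real.continuous_exp.comp (continuous_const.mul
          ((hccst k).comp (continuous_const.prodMk continuous_id)))).measurable).aestronglyMeasurable
        (C := Real.exp (lam * β ^ k * K)) (fun a => ?_)
      rw [abs_of_nonneg (Real.exp_pos _).le]
      exact Real.exp_le_exp.mpr (mul_le_mul_of_nonneg_left (hcstK k x a) (by positivity))
    · intro a
      rw [W_zero']
      exact ciInf_le ⟨0, by rintro y ⟨a', rfl⟩; exact (Real.exp_pos _).le⟩ a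
  | succ m ih =>
    intro k x
    haveI := hπ k
    rw [Vfin_succ']
    have hγβ : lam * β ^ k * β = lam * β ^ (k + 1) := by ring
    set Bn := Real.exp (lam * β ^ k * β * K * ∑ j ∈ Finset.range (m + 1), β ^ j) with hBn
    have hVb : ∀ y, Vfin β cst (fun t x a => (P t x a : Measure X)) π m (k + 1)
        (lam * β ^ k * β) y ≤ Bn :=
      fun y => Vfin_le_bound hβ0 hK hccst hcst0 hcstK hP hπ m (k + 1)
        (lam * β ^ k * β) (by positivity) y
    have hV0 : ∀ y, 0 ≤ Vfin β cst (fun t x a => (P t x a : Measure X)) π m (k + 1)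
        (lam * β ^ k * β) y := fun y => Vfin_nonneg _ _ _ _ _ _
    refine le_integral_of_le ?_ ?_
    · refine RSMFGaux.integrable_of_bounds
        (Vfin_action_meas hccst hP hπ m k (lam * β ^ k) x).aestronglyMeasurable
        (C := Real.exp (lam * β ^ k * K) * Bn) (fun a => ?_)
      rw [abs_of_nonneg (mul_nonneg (Real.exp_pos _).le (integral_nonneg hV0))]
      refine mul_le_mul (Real.exp_le_exp.mpr
        (mul_le_mul_of_nonneg_left (hcstK k x a) (by positivity)))
        (integral_le_of_bounds
          (Vfin_meas hccst hP hπ m (k + 1) (lam * β ^ k * β)).aestronglyMeasurable hV0 hVb)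
        (integral_nonneg hV0) (Real.exp_pos _).le
    · intro a
      obtain ⟨hWc, hWb⟩ := W_spec (K := K) hβ0 hlam hK hccst hcst0 hcstK hP m (k + 1)
      have hWabs : ∀ y, |W β lam cst P m (k + 1) y| ≤
          Real.exp (lam * K * ∑ j ∈ Finset.range (m + 1), β ^ (k + 1 + j)) := fun y => by
        rw [abs_of_nonneg (hWb y).1]; exact (hWb y).2
      have hWint : Integrable (W β lam cst P m (k + 1)) (P k x a : Measure X) :=
        RSMFGaux.integrable_of_bounds hWc.aestronglyMeasurable hWabs
      have hVint : Integrable (Vfin β cst (fun t x a => (P t x a : Measure X)) π m (k + 1)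
          (lam * β ^ k * β)) (P k x a : Measure X) :=
        RSMFGaux.integrable_of_bounds
          (Vfin_meas hccst hP hπ m (k + 1) (lam * β ^ k * β)).aestronglyMeasurable
          (fun y => by rw [abs_of_nonneg (hV0 y)]; exact hVb y)
      have h1 : W β lam cst P (m + 1) k x ≤ Real.exp (lam * β ^ k * cst k x a) *
          ∫ y, W β lam cst P m (k + 1) y ∂(P k x a : Measure X) := by
        rw [W_succ']
        refine ciInf_le ⟨0, ?_⟩ a
        rintro y ⟨a', rfl⟩
        exact mul_nonneg (Real.exp_pos _).le (integral_nonneg fun y => (hWb y).1)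
      refine h1.trans (mul_le_mul_of_nonneg_left ?_ (Real.exp_pos _).le)
      refine integral_mono hWint hVint fun y => ?_
      have := ih (k + 1) y
      rwa [← hγβ] at this

lemma exists_Vfin_le {K : ℝ} (hβ0 : 0 < β) (hβ1 : β < 1) (hlam : 0 < lam) (hK : 0 ≤ K)
    (hccst : ∀ t, Continuous fun q : X × A => cst t q.1 q.2)
    (hcst0 : ∀ t x a, 0 ≤ cst t x a) (hcstK : ∀ t x a, cst t x a ≤ K)
    (hP : ∀ t, Continuous fun q : X × A => P t q.1 q.2) :
    ∀ m k, ∀ ε : ℝ, 0 < ε → ∃ π : MPol X A, ∀ x,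
      Vfin β cst (fun t x a => (P t x a : Measure X)) π.1 m k (lam * β ^ k) x ≤
        W β lam cst P m k x + ε := by
  intro m
  induction m with
  | zero =>
    intro k ε hε
    have hfc : Continuous fun q : X × A => Real.exp (lam * β ^ k * cst k q.1 q.2) :=
      Real.continuous_exp.comp (continuous_const.mul (hccst k))
    obtain ⟨σ, hσ, hσ2⟩ := RSMFGaux.exists_selector hfc (fun q => (Real.exp_pos _).le) hε
    refine ⟨⟨fun _ => Kernel.deterministic σ hσ, fun _ => inferInstance⟩, fun x => ?_⟩
    rw [Vfin_zero']
    have h1 : ∫ a, Real.exp (lam * β ^ k * cst k x a) ∂(Kernel.deterministic σ hσ x) =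
        Real.exp (lam * β ^ k * cst k x (σ x)) := Kernel.integral_deterministic hσ
    rw [h1, W_zero']
    exact hσ2 x
  | succ m ih =>
    intro k ε hε
    set C := Real.exp (lam * K) with hC
    have hCpos : 0 < C := Real.exp_pos _
    obtain ⟨π', hπ'⟩ := ih (k + 1) (ε / (2 * C)) (by positivity)
    obtain ⟨hWc, hWb⟩ := W_spec (K := K) hβ0 hlam hK hccst hcst0 hcstK hP m (k + 1)
    have hWabs : ∀ y, |W β lam cst P m (k + 1) y| ≤
        Real.exp (lam * K * ∑ j ∈ Finset.range (m + 1), β ^ (k + 1 + j)) := fun y => by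
      rw [abs_of_nonneg (hWb y).1]; exact (hWb y).2
    have hintc : Continuous fun q : X × A =>
        ∫ y, W β lam cst P m (k + 1) y ∂(P k q.1 q.2 : Measure X) :=
      RSMFGaux.continuous_integral_prob (hP k) hWc hWabs
    have hfc : Continuous fun q : X × A => Real.exp (lam * β ^ k * cst k q.1 q.2) *
        ∫ y, W β lam cst P m (k + 1) y ∂(P k q.1 q.2 : Measure X) :=
      (Real.continuous_exp.comp (continuous_const.mul (hccst k))).mul hintc
    have hf0 : ∀ q : X × A, 0 ≤ Real.exp (lam * β ^ k * cst k q.1 q.2) *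
        ∫ y, W β lam cst P m (k + 1) y ∂(P k q.1 q.2 : Measure X) :=
      fun q => mul_nonneg (Real.exp_pos _).le (integral_nonneg fun y => (hWb y).1)
    obtain ⟨σ, hσ, hσ2⟩ := RSMFGaux.exists_selector hfc hf0 (half_pos hε)
    set πc : ℕ → Kernel X A := fun t => if t = k then Kernel.deterministic σ hσ else π'.1 t
      with hπc
    have hπcM : ∀ t, IsMarkovKernel (πc t) := by
      intro t
      rw [hπc]
      dsimp only
      split
      · infer_instance
      · exact π'.2 t
    refine ⟨⟨πc, hπcM⟩, fun x => ?_⟩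
    have hπck : πc k = Kernel.deterministic σ hσ := if_pos rfl
    have hcongr : Vfin β cst (fun t x a => (P t x a : Measure X)) πc m (k + 1)
        (lam * β ^ k * β) = Vfin β cst (fun t x a => (P t x a : Measure X)) π'.1 m (k + 1)
        (lam * β ^ k * β) :=
      Vfin_congr _ m (k + 1) (fun t ht => if_neg (by omega)) _
    have h1 : Vfin β cst (fun t x a => (P t x a : Measure X)) πc (m + 1) k (lam * β ^ k) x
        = Real.exp (lam * β ^ k * cst k x (σ x)) *
          ∫ y, Vfin β cst (fun t x a => (P t x a : Measure X)) π'.1 m (k + 1)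
            (lam * β ^ k * β) y ∂(P k x (σ x) : Measure X) := by
      rw [Vfin_succ', hπck, hcongr]
      exact Kernel.integral_deterministic hσ
    have hγβ : lam * β ^ k * β = lam * β ^ (k + 1) := by ring
    have hV0 : ∀ y, 0 ≤ Vfin β cst (fun t x a => (P t x a : Measure X)) π'.1 m (k + 1)
        (lam * β ^ k * β) y := fun y => Vfin_nonneg _ _ _ _ _ _
    have h2 : ∀ y, Vfin β cst (fun t x a => (P t x a : Measure X)) π'.1 m (k + 1)
        (lam * β ^ k * β) y ≤ W β lam cst P m (k + 1) y + ε / (2 * C) := fun y => by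
      rw [hγβ]; exact hπ' y
    have hVint : Integrable (Vfin β cst (fun t x a => (P t x a : Measure X)) π'.1 m (k + 1)
        (lam * β ^ k * β)) (P k x (σ x) : Measure X) := by
      refine RSMFGaux.integrable_of_bounds
        (Vfin_meas hccst hP π'.2 m (k + 1) (lam * β ^ k * β)).aestronglyMeasurable
        (C := Real.exp (lam * β ^ k * β * K * ∑ j ∈ Finset.range (m + 1), β ^ j))
        (fun y => ?_)
      rw [abs_of_nonneg (hV0 y)]
      exact Vfin_le_bound hβ0 hK hccst hcst0 hcstK hP π'.2 m (k + 1)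
        (lam * β ^ k * β) (by positivity) y
    have hWint : Integrable (W β lam cst P m (k + 1)) (P k x (σ x) : Measure X) :=
      RSMFGaux.integrable_of_bounds hWc.aestronglyMeasurable hWabs
    have h3 : ∫ y, Vfin β cst (fun t x a => (P t x a : Measure X)) π'.1 m (k + 1)
        (lam * β ^ k * β) y ∂(P k x (σ x) : Measure X) ≤
        (∫ y, W β lam cst P m (k + 1) y ∂(P k x (σ x) : Measure X)) + ε / (2 * C) := by
      calc ∫ y, Vfin β cst (fun t x a => (P t x a : Measure X)) π'.1 m (k + 1)
            (lam * β ^ k * β) y ∂(P k x (σ x) : Measure X)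
          ≤ ∫ y, (W β lam cst P m (k + 1) y + ε / (2 * C)) ∂(P k x (σ x) : Measure X) :=
            integral_mono hVint (hWint.add (integrable_const _)) h2
        _ = (∫ y, W β lam cst P m (k + 1) y ∂(P k x (σ x) : Measure X)) + ε / (2 * C) := by
            rw [integral_add hWint (integrable_const _)]
            simp
    have hexpC : Real.exp (lam * β ^ k * cst k x (σ x)) ≤ C := by
      rw [hC]
      refine Real.exp_le_exp.mpr ?_
      have hb1 : β ^ k ≤ 1 := pow_le_one₀ hβ0.le hβ1.le
      calc lam * β ^ k * cst k x (σ x) ≤ lam * 1 * cst k x (σ x) :=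
            mul_le_mul_of_nonneg_right
              (mul_le_mul_of_nonneg_left hb1 hlam.le) (hcst0 k x (σ x))
        _ = lam * cst k x (σ x) := by ring
        _ ≤ lam * K := mul_le_mul_of_nonneg_left (hcstK k x (σ x)) hlam.le
    calc Vfin β cst (fun t x a => (P t x a : Measure X)) πc (m + 1) k (lam * β ^ k) x
        = Real.exp (lam * β ^ k * cst k x (σ x)) *
          ∫ y, Vfin β cst (fun t x a => (P t x a : Measure X)) π'.1 m (k + 1)
            (lam * β ^ k * β) y ∂(P k x (σ x) : Measure X) := h1
      _ ≤ Real.exp (lam * β ^ k * cst k x (σ x)) *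
          ((∫ y, W β lam cst P m (k + 1) y ∂(P k x (σ x) : Measure X)) + ε / (2 * C)) :=
          mul_le_mul_of_nonneg_left h3 (Real.exp_pos _).le
      _ = Real.exp (lam * β ^ k * cst k x (σ x)) *
          (∫ y, W β lam cst P m (k + 1) y ∂(P k x (σ x) : Measure X)) +
          Real.exp (lam * β ^ k * cst k x (σ x)) * (ε / (2 * C)) := mul_add _ _ _
      _ ≤ (W β lam cst P (m + 1) k x + ε / 2) + C * (ε / (2 * C)) := by
          refine add_le_add ?_ (mul_le_mul_of_nonneg_right hexpC (by positivity))
          have := hσ2 x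
          rw [W_succ']
          exact this
      _ = W β lam cst P (m + 1) k x + ε := by
          field_simp
          ring

lemma JoptFin_eq_W {K : ℝ} (hβ0 : 0 < β) (hβ1 : β < 1) (hlam : 0 < lam) (hK : 0 ≤ K)
    (hccst : ∀ t, Continuous fun q : X × A => cst t q.1 q.2)
    (hcst0 : ∀ t x a, 0 ≤ cst t x a) (hcstK : ∀ t x a, cst t x a ≤ K)
    (hP : ∀ t, Continuous fun q : X × A => P t q.1 q.2) (m k : ℕ) (x : X) :
    (⨅ π : MPol X A, Vfin β cst (fun t x a => (P t x a : Measure X)) π.1 m k (lam * β ^ k) x)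
      = W β lam cst P m k x := by
  haveI : Nonempty (MPol X A) :=
    ⟨⟨fun _ => Kernel.deterministic (fun _ => Classical.arbitrary A) measurable_const,
      fun _ => inferInstance⟩⟩
  refine le_antisymm ?_ (le_ciInf fun π => W_le_Vfin hβ0 hlam hK hccst hcst0 hcstK hP π.2 m k x)
  apply RSMFGaux.real_le_of_forall_pos_le_add
  intro ε hε
  obtain ⟨π, hπ⟩ := exists_Vfin_le hβ0 hβ1 hlam hK hccst hcst0 hcstK hP m k ε hε
  exact le_trans (ciInf_le ⟨0, by rintro y ⟨π', rfl⟩; exact Vfin_nonneg _ _ _ _ _ _⟩ π) (hπ x)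

lemma sum_Icc_lt (hβ0 : 0 < β) (hβ1 : β < 1) (k n : ℕ) :
    (∑ t ∈ Finset.Icc k n, β ^ t) < 1 / (1 - β) := by
  have h1 : ∑ t ∈ Finset.Icc k n, β ^ t ≤ ∑ t ∈ Finset.range (n + 1), β ^ t := by
    refine Finset.sum_le_sum_of_subset_of_nonneg ?_ (fun t _ _ => by positivity)
    intro t ht
    exact Finset.mem_range.mpr (by have := (Finset.mem_Icc.mp ht).2; omega)
  have h2 : ∑ t ∈ Finset.range (n + 1), β ^ t < 1 / (1 - β) := by
    rw [geom_sum_eq (ne_of_lt hβ1)]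
    have heq : (β ^ (n + 1) - 1) / (β - 1) = (1 - β ^ (n + 1)) / (1 - β) := by
      rw [← neg_div_neg_eq]
      congr 1 <;> ring
    rw [heq]
    have h1β : 0 < 1 - β := by linarith
    rw [div_lt_div_iff₀ h1β h1β]
    nlinarith [pow_pos hβ0 (n + 1)]
  linarith

lemma sum_Icc_eq_range {k n : ℕ} (hkn : k ≤ n) :
    ∑ t ∈ Finset.Icc k n, β ^ t = ∑ j ∈ Finset.range (n - k + 1), β ^ (k + j) := by
  rw [← Finset.Ico_add_one_right_eq_Icc, Finset.sum_Ico_eq_sum_range,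
    show n + 1 - k = n - k + 1 from by omega]

end Main

/-- for all `n ≥ k ≥ 0` the finite-horizon optimal value function
`J_k^n(·, λβ^k)` is continuous and bounded with sup-norm at most `e^{λK ζ_{k,n}}`, where
`ζ_{k,n} = Σ_{t=k}^n β^t < 1/(1−β)`, and these functions satisfy the backward recursion
`J_n^n(x,λβ^n) = inf_a e^{λβ^n c_n(x,a)}` and
`J_k^n(x,λβ^k) = inf_a [e^{λβ^k c_k(x,a)} ∫ J_{k+1}^n(y,λβ^{k+1}) p_k(dy|x,a)]` for `k < n`. -/
theorem finite_horizon_value_continuous_bounded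
    {X A : Type*} [TopologicalSpace X] [PolishSpace X] [MeasurableSpace X] [BorelSpace X]
    [MetricSpace A] [CompactSpace A] [Nonempty A] [MeasurableSpace A] [BorelSpace A]
    [SecondCountableTopology A]
    (p : X → A → ProbabilityMeasure X → ProbabilityMeasure X)
    (hp : Continuous fun q : X × A × ProbabilityMeasure X => p q.1 q.2.1 q.2.2)
    (c : X → A → ProbabilityMeasure X → ℝ)
    (hc : Continuous fun q : X × A × ProbabilityMeasure X => c q.1 q.2.1 q.2.2)
    (K : ℝ) (hc0 : ∀ x a μ, 0 ≤ c x a μ) (hcK : ∀ x a μ, c x a μ ≤ K)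
    (β lam : ℝ) (hβ0 : 0 < β) (hβ1 : β < 1) (hlam : 0 < lam)
    (μflow : ℕ → ProbabilityMeasure X) :
    ∀ k n : ℕ, k ≤ n →
      (Continuous (JoptFin β lam (fun t x a => c x a (μflow t))
          (fun t x a => (p x a (μflow t) : Measure X)) k n) ∧
        (∀ x, |JoptFin β lam (fun t x a => c x a (μflow t))
            (fun t x a => (p x a (μflow t) : Measure X)) k n x| ≤
          Real.exp (lam * K * ∑ t ∈ Finset.Icc k n, β ^ t)) ∧
        (∑ t ∈ Finset.Icc k n, β ^ t) < 1 / (1 - β)) ∧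
      (∀ x, JoptFin β lam (fun t x a => c x a (μflow t))
          (fun t x a => (p x a (μflow t) : Measure X)) n n x =
        ⨅ a : A, Real.exp (lam * β ^ n * c x a (μflow n))) ∧
      (k < n → ∀ x, JoptFin β lam (fun t x a => c x a (μflow t))
          (fun t x a => (p x a (μflow t) : Measure X)) k n x =
        ⨅ a : A, Real.exp (lam * β ^ k * c x a (μflow k)) *
          ∫ y, JoptFin β lam (fun t x a => c x a (μflow t))
              (fun t x a => (p x a (μflow t) : Measure X)) (k + 1) n y
            ∂(p x a (μflow k) : Measure X)) := by
  intro k n hkn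
  have hsumlt : (∑ t ∈ Finset.Icc k n, β ^ t) < 1 / (1 - β) := sum_Icc_lt hβ0 hβ1 k n
  by_cases hXe : Nonempty X
  · obtain ⟨x₀⟩ := hXe
    have hK : 0 ≤ K := le_trans (hc0 x₀ (Classical.arbitrary A) (μflow 0))
      (hcK x₀ (Classical.arbitrary A) (μflow 0))
    have hccst : ∀ t : ℕ, Continuous fun q : X × A => c q.1 q.2 (μflow t) := fun t =>
      hc.comp (continuous_fst.prodMk (continuous_snd.prodMk continuous_const))
    have hPP : ∀ t : ℕ, Continuous fun q : X × A => p q.1 q.2 (μflow t) := fun t =>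
      hp.comp (continuous_fst.prodMk (continuous_snd.prodMk continuous_const))
    have hcst0 : ∀ (t : ℕ) (x : X) (a : A), 0 ≤ c x a (μflow t) := fun t x a => hc0 x a _
    have hcstK : ∀ (t : ℕ) (x : X) (a : A), c x a (μflow t) ≤ K := fun t x a => hcK x a _
    have keyJ : ∀ (k' n' : ℕ) (x : X),
        JoptFin β lam (fun t x a => c x a (μflow t))
          (fun t x a => (p x a (μflow t) : Measure X)) k' n' x =
        W β lam (fun t x a => c x a (μflow t)) (fun t x a => p x a (μflow t)) (n' - k') k' x :=
      fun k' n' x => JoptFin_eq_W (K := K) hβ0 hβ1 hlam hK hccst hcst0 hcstK hPP (n' - k') k' x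
    have hWspec := W_spec (β := β) (lam := lam)
      (cst := fun t x a => c x a (μflow t)) (P := fun t x a => p x a (μflow t))
      (K := K) hβ0 hlam hK hccst hcst0 hcstK hPP
    refine ⟨⟨?_, ?_, hsumlt⟩, ?_, ?_⟩
    · have heq : (JoptFin β lam (fun t x a => c x a (μflow t))
          (fun t x a => (p x a (μflow t) : Measure X)) k n) =
          W β lam (fun t x a => c x a (μflow t)) (fun t x a => p x a (μflow t)) (n - k) k :=
        funext (keyJ k n)
      rw [heq]
      exact (hWspec (n - k) k).1
    · intro x
      rw [keyJ k n x, abs_of_nonneg ((hWspec (n - k) k).2 x).1]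
      refine (((hWspec (n - k) k).2 x).2).trans (le_of_eq ?_)
      congr 1
      rw [sum_Icc_eq_range (β := β) hkn]
    · intro x
      rw [keyJ n n x, Nat.sub_self]
      exact W_zero' n x
    · intro hklt x
      obtain ⟨m, hm⟩ : ∃ m, n - k = m + 1 := ⟨n - k - 1, by omega⟩
      rw [keyJ k n x, hm]
      have hint_eq : ∀ a : A,
          (∫ y, W β lam (fun t x a => c x a (μflow t)) (fun t x a => p x a (μflow t))
              m (k + 1) y ∂(p x a (μflow k) : Measure X)) =
          ∫ y, JoptFin β lam (fun t x a => c x a (μflow t))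
              (fun t x a => (p x a (μflow t) : Measure X)) (k + 1) n y
            ∂(p x a (μflow k) : Measure X) := by
        intro a
        congr 1
        funext y
        rw [keyJ (k + 1) n y, show n - (k + 1) = m from by omega]
      have hfun : (fun a : A => Real.exp (lam * β ^ k * c x a (μflow k)) *
            ∫ y, W β lam (fun t x a => c x a (μflow t)) (fun t x a => p x a (μflow t))
              m (k + 1) y ∂(p x a (μflow k) : Measure X)) =
          (fun a : A => Real.exp (lam * β ^ k * c x a (μflow k)) *
            ∫ y, JoptFin β lam (fun t x a => c x a (μflow t))
                (fun t x a => (p x a (μflow t) : Measure X)) (k + 1) n y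
              ∂(p x a (μflow k) : Measure X)) :=
        funext fun a => by rw [hint_eq a]
      exact (W_succ' m k x).trans (congrArg (fun g : A → ℝ => ⨅ a, g a) hfun)
  · haveI : IsEmpty X := not_nonempty_iff.mp hXe
    refine ⟨⟨?_, fun x => (IsEmpty.false x).elim, hsumlt⟩, fun x => (IsEmpty.false x).elim,
      fun _ x => (IsEmpty.false x).elim⟩
    have heq : (JoptFin β lam (fun t x a => c x a (μflow t))
        (fun t x a => (p x a (μflow t) : Measure X)) k n) = fun _ => (0 : ℝ) :=
      funext fun x => (IsEmpty.false x).elim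
    rw [heq]
    exact continuous_const


end RSMFG
end

section
/- Let (Ω, 𝓕, P) be a probability space, let K ≥ 0, λ > 0 and β ∈ (0,1), and let (c_t)_{t≥0} be measurable random variables with 0 ≤ c_t ≤ K for all t. Then for every n ≥ 0: E[exp(λ Σ_{t=0}^n β^t c_t)] ≤ E[exp(λ Σ_{t=0}^∞ β^t c_t)] ≤ E[exp(λ Σ_{t=0}^n β^t c_t)] + (λK/(1−β)) e^{λK/(1−β)} β^{n+1}. -/
open MeasureTheory Filter Topology

lemma exp_le_add_mul_exp {x : ℝ} (hx : 0 ≤ x) : Real.exp x ≤ 1 + x * Real.exp x := by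
  have h := Real.add_one_le_exp (-x)
  have hpos : (0:ℝ) < Real.exp x := Real.exp_pos x
  have : Real.exp (-x) = (Real.exp x)⁻¹ := Real.exp_neg x
  rw [this] at h
  have := mul_le_mul_of_nonneg_left h hpos.le
  rw [mul_inv_cancel₀ hpos.ne'] at this
  nlinarith

/-- key quantitative tail estimate for risk-sensitive discounted costs.
If `0 ≤ c_t ≤ K`, `λ > 0`, `β ∈ (0,1)`, then for every `n`,
`E[exp(λ Σ_{t=0}^n β^t c_t)] ≤ E[exp(λ Σ_{t=0}^∞ β^t c_t)]
  ≤ E[exp(λ Σ_{t=0}^n β^t c_t)] + (λK/(1−β)) e^{λK/(1−β)} β^{n+1}`. -/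
theorem risk_sensitive_tail_estimate {Ω : Type*} [MeasurableSpace Ω]
    (P : Measure Ω) [IsProbabilityMeasure P]
    (K lam β : ℝ) (hK : 0 ≤ K) (hlam : 0 < lam) (hβ0 : 0 < β) (hβ1 : β < 1)
    (c : ℕ → Ω → ℝ) (hmeas : ∀ t, Measurable (c t))
    (hc0 : ∀ t ω, 0 ≤ c t ω) (hcK : ∀ t ω, c t ω ≤ K) (n : ℕ) :
    (∫ ω, Real.exp (lam * ∑ t ∈ Finset.range (n + 1), β ^ t * c t ω) ∂P ≤
       ∫ ω, Real.exp (lam * ∑' t : ℕ, β ^ t * c t ω) ∂P) ∧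
    (∫ ω, Real.exp (lam * ∑' t : ℕ, β ^ t * c t ω) ∂P ≤
       ∫ ω, Real.exp (lam * ∑ t ∈ Finset.range (n + 1), β ^ t * c t ω) ∂P +
         (lam * K / (1 - β)) * Real.exp (lam * K / (1 - β)) * β ^ (n + 1)) := by
  have h1β : (0:ℝ) < 1 - β := by linarith
  have hgeo : Summable (fun t : ℕ => β ^ t) := summable_geometric_of_lt_one hβ0.le hβ1
  have hterm_nonneg : ∀ ω t, 0 ≤ β ^ t * c t ω := fun ω t =>
    mul_nonneg (pow_nonneg hβ0.le t) (hc0 t ω)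
  have hterm_le : ∀ ω t, β ^ t * c t ω ≤ K * β ^ t := by
    intro ω t
    have h1 := hcK t ω
    have h2 : (0:ℝ) ≤ β ^ t := pow_nonneg hβ0.le t
    nlinarith
  have hsum : ∀ ω, Summable (fun t => β ^ t * c t ω) := fun ω =>
    Summable.of_nonneg_of_le (hterm_nonneg ω) (hterm_le ω) (hgeo.mul_left K)
  have htsum_geo : ∑' t : ℕ, β ^ t = (1 - β)⁻¹ := tsum_geometric_of_lt_one hβ0.le hβ1
  -- S ≤ K / (1 - β)
  have hS_le : ∀ ω, (∑' t : ℕ, β ^ t * c t ω) ≤ K / (1 - β) := by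
    intro ω
    calc (∑' t : ℕ, β ^ t * c t ω) ≤ ∑' t : ℕ, K * β ^ t :=
          Summable.tsum_le_tsum (hterm_le ω) (hsum ω) (hgeo.mul_left K)
      _ = K / (1 - β) := by rw [tsum_mul_left, htsum_geo, div_eq_mul_inv]
  have hSn_le_S : ∀ ω, (∑ t ∈ Finset.range (n + 1), β ^ t * c t ω) ≤ ∑' t : ℕ, β ^ t * c t ω :=
    fun ω => Summable.sum_le_tsum _ (fun t _ => hterm_nonneg ω t) (hsum ω)
  have hSn_nonneg : ∀ ω, 0 ≤ ∑ t ∈ Finset.range (n + 1), β ^ t * c t ω := fun ω =>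
    Finset.sum_nonneg fun t _ => hterm_nonneg ω t
  -- measurability
  have hmeasSn : Measurable fun ω => ∑ t ∈ Finset.range (n + 1), β ^ t * c t ω :=
    Finset.measurable_sum _ fun t _ => (hmeas t).const_mul _
  have hmeasS : Measurable fun ω => ∑' t : ℕ, β ^ t * c t ω := by
    apply measurable_of_tendsto_metrizable
      (f := fun m ω => ∑ t ∈ Finset.range m, β ^ t * c t ω)
    · exact fun m => Finset.measurable_sum _ fun t _ => (hmeas t).const_mul _
    · rw [tendsto_pi_nhds]
      exact fun ω => (hsum ω).hasSum.tendsto_sum_nat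
  have hmeas_expS : Measurable fun ω => Real.exp (lam * ∑' t : ℕ, β ^ t * c t ω) :=
    (Real.measurable_exp).comp (hmeasS.const_mul lam)
  have hmeas_expSn : Measurable fun ω =>
      Real.exp (lam * ∑ t ∈ Finset.range (n + 1), β ^ t * c t ω) :=
    (Real.measurable_exp).comp (hmeasSn.const_mul lam)
  -- integrability via bound exp(lam K/(1-β))
  have hboundS : ∀ ω, Real.exp (lam * ∑' t : ℕ, β ^ t * c t ω)
      ≤ Real.exp (lam * K / (1 - β)) := by
    intro ω
    apply Real.exp_le_exp.2
    rw [mul_div_assoc]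
    exact mul_le_mul_of_nonneg_left (hS_le ω) hlam.le
  have hboundSn : ∀ ω, Real.exp (lam * ∑ t ∈ Finset.range (n + 1), β ^ t * c t ω)
      ≤ Real.exp (lam * K / (1 - β)) := fun ω =>
    le_trans (Real.exp_le_exp.2 (mul_le_mul_of_nonneg_left (hSn_le_S ω) hlam.le)) (hboundS ω)
  have hintS : Integrable (fun ω => Real.exp (lam * ∑' t : ℕ, β ^ t * c t ω)) P := by
    apply (integrable_const (Real.exp (lam * K / (1 - β)))).mono'
      hmeas_expS.aestronglyMeasurable
    filter_upwards with ω
    rw [Real.norm_eq_abs, abs_of_pos (Real.exp_pos _)]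
    exact hboundS ω
  have hintSn : Integrable (fun ω =>
      Real.exp (lam * ∑ t ∈ Finset.range (n + 1), β ^ t * c t ω)) P := by
    apply (integrable_const (Real.exp (lam * K / (1 - β)))).mono'
      hmeas_expSn.aestronglyMeasurable
    filter_upwards with ω
    rw [Real.norm_eq_abs, abs_of_pos (Real.exp_pos _)]
    exact hboundSn ω
  constructor
  · apply integral_mono hintSn hintS
    intro ω
    exact Real.exp_le_exp.2 (mul_le_mul_of_nonneg_left (hSn_le_S ω) hlam.le)
  · -- pointwise: exp(lam S) ≤ exp(lam Sn) + (lam K/(1-β)) exp(lam K/(1-β)) β^(n+1)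
    have key : ∀ ω, Real.exp (lam * ∑' t : ℕ, β ^ t * c t ω) ≤
        Real.exp (lam * ∑ t ∈ Finset.range (n + 1), β ^ t * c t ω) +
          (lam * K / (1 - β)) * Real.exp (lam * K / (1 - β)) * β ^ (n + 1) := by
      intro ω
      set Sn := ∑ t ∈ Finset.range (n + 1), β ^ t * c t ω with hSn
      set S := ∑' t : ℕ, β ^ t * c t ω with hSdef
      -- tail bound: S - Sn ≤ K β^(n+1) / (1 - β)
      have hsplit : Sn + (∑' t : ℕ, β ^ (t + (n+1)) * c (t + (n+1)) ω) = S :=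
        Summable.sum_add_tsum_nat_add (n + 1) (hsum ω)
      have htail_nonneg : 0 ≤ ∑' t : ℕ, β ^ (t + (n+1)) * c (t + (n+1)) ω :=
        tsum_nonneg fun t => hterm_nonneg ω _
      have htail_le : (∑' t : ℕ, β ^ (t + (n+1)) * c (t + (n+1)) ω)
          ≤ K / (1 - β) * β ^ (n + 1) := by
        have hsummable : Summable fun t : ℕ => β ^ (t + (n+1)) * c (t + (n+1)) ω :=
          ((hsum ω).comp_injective (add_left_injective (n+1)))
        calc (∑' t : ℕ, β ^ (t + (n+1)) * c (t + (n+1)) ω)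
            ≤ ∑' t : ℕ, K * β ^ (n+1) * β ^ t := by
              apply Summable.tsum_le_tsum _ hsummable ((hgeo.mul_left _))
              intro t
              have := hterm_le ω (t + (n+1))
              calc β ^ (t + (n+1)) * c (t + (n+1)) ω ≤ K * β ^ (t + (n+1)) := this
                _ = K * β ^ (n+1) * β ^ t := by rw [pow_add]; ring
          _ = K / (1 - β) * β ^ (n + 1) := by
              rw [tsum_mul_left, htsum_geo]; field_simp
      have hdiff : S - Sn ≤ K / (1 - β) * β ^ (n + 1) := by
        rw [← hsplit]; simpa using htail_le
      have hdiff0 : 0 ≤ S - Sn := by rw [← hsplit]; simpa using htail_nonneg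
      -- exp(lam S) = exp(lam Sn) exp(lam (S - Sn))
      have hfac : Real.exp (lam * S) =
          Real.exp (lam * Sn) * Real.exp (lam * (S - Sn)) := by
        rw [← Real.exp_add]; ring_nf
      have hx : 0 ≤ lam * (S - Sn) := mul_nonneg hlam.le hdiff0
      have hstep := exp_le_add_mul_exp hx
      have hprod : Real.exp (lam * Sn) * Real.exp (lam * (S - Sn)) ≤
          Real.exp (lam * Sn) + lam * (S - Sn) *
            (Real.exp (lam * Sn) * Real.exp (lam * (S - Sn))) := by
        have := mul_le_mul_of_nonneg_left hstep (Real.exp_pos (lam * Sn)).le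
        nlinarith [Real.exp_pos (lam * Sn), Real.exp_pos (lam * (S - Sn))]
      have hexpSbound : Real.exp (lam * Sn) * Real.exp (lam * (S - Sn)) ≤
          Real.exp (lam * K / (1 - β)) := by rw [← hfac]; exact hboundS ω
      have hlamdiff : lam * (S - Sn) ≤ lam * K / (1 - β) * β ^ (n + 1) := by
        calc lam * (S - Sn) ≤ lam * (K / (1 - β) * β ^ (n + 1)) :=
              mul_le_mul_of_nonneg_left hdiff hlam.le
          _ = lam * K / (1 - β) * β ^ (n + 1) := by ring
      calc Real.exp (lam * S)
          = Real.exp (lam * Sn) * Real.exp (lam * (S - Sn)) := hfac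
        _ ≤ Real.exp (lam * Sn) + lam * (S - Sn) *
              (Real.exp (lam * Sn) * Real.exp (lam * (S - Sn))) := hprod
        _ ≤ Real.exp (lam * Sn) + (lam * K / (1 - β) * β ^ (n + 1)) *
              Real.exp (lam * K / (1 - β)) := by
            exact add_le_add_right (mul_le_mul hlamdiff hexpSbound
              (mul_pos (Real.exp_pos _) (Real.exp_pos _)).le
              (by positivity)) _
        _ = Real.exp (lam * Sn) +
              lam * K / (1 - β) * Real.exp (lam * K / (1 - β)) * β ^ (n + 1) := by ring
    calc ∫ ω, Real.exp (lam * ∑' t : ℕ, β ^ t * c t ω) ∂P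
        ≤ ∫ ω, (Real.exp (lam * ∑ t ∈ Finset.range (n + 1), β ^ t * c t ω) +
            (lam * K / (1 - β)) * Real.exp (lam * K / (1 - β)) * β ^ (n + 1)) ∂P := by
          apply integral_mono hintS (hintSn.add (integrable_const _)) key
      _ = ∫ ω, Real.exp (lam * ∑ t ∈ Finset.range (n + 1), β ^ t * c t ω) ∂P +
            (lam * K / (1 - β)) * Real.exp (lam * K / (1 - β)) * β ^ (n + 1) := by
          rw [integral_add hintSn (integrable_const _), integral_const]
          simp
end

section
/- Let E be a metric space, let (ξ_n)_{n≥1} and ξ be Borel probability measures on E with ξ_n converging weakly to ξ, and let F_n, F, J_n, J : E → ℝ be continuous functions that are uniformly bounded (sup_n (‖F_n‖_∞ + ‖J_n‖_∞) < ∞, and F, J bounded) such that F_n ≥ J_n pointwise for every n, F_n converges to F continuously (i.e. F_n(e_n) → F(e) whenever e_n → e in E) and J_n converges to J continuously. If ξ_n({e : F_n(e) = J_n(e)}) = 1 for every n, then ξ({e : F(e) = J(e)}) = 1. -/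
open MeasureTheory Filter Topology

open Classical in
/-- From continuous convergence, a locally uniform lower bound on the `G n`. -/
lemma cc_lower_aux {E : Type*} [MetricSpace E] (G : ℕ → E → ℝ) (Glim : E → ℝ)
    (hcc : ∀ (e : E) (u : ℕ → E), Tendsto u atTop (𝓝 e) →
      Tendsto (fun n => G n (u n)) atTop (𝓝 (Glim e)))
    (e : E) (ε : ℝ) (hε : 0 < ε) :
    ∃ N : ℕ, ∃ δ > (0:ℝ), ∀ n ≥ N, ∀ x, dist x e < δ → Glim e - ε < G n x := by
  by_contra hcon
  push_neg at hcon
  -- hcon : ∀ N, ∀ δ > 0, ∃ n ≥ N, ∃ x, dist x e < δ ∧ G n x ≤ Glim e - ε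
  have hchoice : ∀ k : ℕ, ∃ q : ℕ × E, k ≤ q.1 ∧ dist q.2 e < 1/(k+1) ∧
      G q.1 q.2 ≤ Glim e - ε := by
    intro k
    obtain ⟨n, hn, x, hx, hGx⟩ := hcon k (1/(k+1)) (by positivity)
    exact ⟨(n, x), hn, hx, hGx⟩
  choose q hq1 hq2 hq3 using hchoice
  let n : ℕ → ℕ := fun k => (q k).1
  let x : ℕ → E := fun k => (q k).2
  let u : ℕ → E := fun m => if h : ∃ k, n k = m then x h.choose else e
  have key : ∀ m, (∃ k, n k = m) → ∃ j, n j = m ∧ u m = x j := by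
    intro m h
    exact ⟨h.choose, h.choose_spec, by simp only [u, dif_pos h]⟩
  have hu_tendsto : Tendsto u atTop (𝓝 e) := by
    rw [Metric.tendsto_atTop]
    intro δ hδ
    obtain ⟨K, hK⟩ := exists_nat_one_div_lt hδ
    refine ⟨(Finset.range (K+1)).sup n + 1, fun m hm => ?_⟩
    by_cases h : ∃ k, n k = m
    · obtain ⟨j, hjm, hum⟩ := key m h
      have hkK : K ≤ j := by
        by_contra hlt
        push_neg at hlt
        have hle : n j ≤ (Finset.range (K+1)).sup n :=
          Finset.le_sup (Finset.mem_range.mpr (Nat.lt_succ_of_lt hlt))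
        omega
      have hd : dist (u m) e < 1/(j+1) := by rw [hum]; exact hq2 j
      have hmono : (1:ℝ)/(j+1) ≤ 1/(K+1) := by
        apply one_div_le_one_div_of_le (by positivity)
        have : (K:ℝ) ≤ j := Nat.cast_le.mpr hkK
        linarith
      calc dist (u m) e < 1/(j+1) := hd
        _ ≤ 1/(K+1) := hmono
        _ < δ := hK
    · simp only [u, dif_neg h, dist_self]; exact hδ
  have hlim : Tendsto (fun m => G m (u m)) atTop (𝓝 (Glim e)) := hcc e u hu_tendsto
  have hn_tendsto : Tendsto n atTop atTop := tendsto_atTop_mono hq1 tendsto_id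
  have hsub : Tendsto (fun k => G (n k) (u (n k))) atTop (𝓝 (Glim e)) :=
    hlim.comp hn_tendsto
  have hle : ∀ k, G (n k) (u (n k)) ≤ Glim e - ε := by
    intro k
    obtain ⟨j, hjm, hum⟩ := key (n k) ⟨k, rfl⟩
    rw [hum, ← hjm]
    exact hq3 j
  have : Glim e ≤ Glim e - ε := le_of_tendsto' hsub hle
  linarith

/-- if `ξ_n → ξ` weakly, `F_n, J_n` are continuous, uniformly bounded,
`F_n ≥ J_n`, `F_n → F` and `J_n → J` continuously (with `F, J` continuous and bounded),
and `ξ_n({F_n = J_n}) = 1` for all `n`, then `ξ({F = J}) = 1`. -/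
theorem measure_eq_set_of_continuous_convergence
    {E : Type*} [MetricSpace E] [MeasurableSpace E] [BorelSpace E]
    (ξseq : ℕ → ProbabilityMeasure E) (ξ : ProbabilityMeasure E)
    (hconv : Tendsto ξseq atTop (𝓝 ξ))
    (F J : ℕ → E → ℝ) (Flim Jlim : E → ℝ)
    (hFcont : ∀ n, Continuous (F n)) (hJcont : ∀ n, Continuous (J n))
    (hFlimcont : Continuous Flim) (hJlimcont : Continuous Jlim)
    (hFJbd : ∃ C, ∀ n e, |F n e| ≤ C ∧ |J n e| ≤ C)
    (hFlimbd : ∃ C, ∀ e, |Flim e| ≤ C) (hJlimbd : ∃ C, ∀ e, |Jlim e| ≤ C)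
    (hge : ∀ n e, J n e ≤ F n e)
    (hFcc : ∀ (e : E) (u : ℕ → E), Tendsto u atTop (𝓝 e) →
      Tendsto (fun n => F n (u n)) atTop (𝓝 (Flim e)))
    (hJcc : ∀ (e : E) (u : ℕ → E), Tendsto u atTop (𝓝 e) →
      Tendsto (fun n => J n (u n)) atTop (𝓝 (Jlim e)))
    (heq : ∀ n, (ξseq n : Measure E) {e | F n e = J n e} = 1) :
    (ξ : Measure E) {e | Flim e = Jlim e} = 1 := by
  have hGcc : ∀ (e : E) (u : ℕ → E), Tendsto u atTop (𝓝 e) →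
      Tendsto (fun n => F n (u n) - J n (u n)) atTop (𝓝 (Flim e - Jlim e)) := fun e u hu =>
    (hFcc e u hu).sub (hJcc e u hu)
  -- Flim - Jlim is nonnegative
  have hGlim_nonneg : ∀ e, 0 ≤ Flim e - Jlim e := by
    intro e
    have h := hGcc e (fun _ => e) tendsto_const_nhds
    exact ge_of_tendsto' h (fun n => sub_nonneg.mpr (hge n e))
  -- the complement of each ξseq n's equality set is null
  have hnull : ∀ n, (ξseq n : Measure E) {e | F n e = J n e}ᶜ = 0 := by
    intro n
    have hms : MeasurableSet {e | F n e = J n e} :=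
      (isClosed_eq (hFcont n) (hJcont n)).measurableSet
    have h1 := measure_add_measure_compl (μ := (ξseq n : Measure E)) hms
    rw [heq n, measure_univ] at h1
    have h0 : (1:ENNReal) + (ξseq n : Measure E) {e | F n e = J n e}ᶜ = 1 + 0 := by
      rw [add_zero]; exact h1
    exact (ENNReal.add_right_inj ENNReal.one_ne_top).mp h0
  -- for each ε > 0, the set {Flim - Jlim ≥ ε} is ξ-null
  have hkey : ∀ ε : ℝ, 0 < ε → (ξ : Measure E) {e | ε ≤ Flim e - Jlim e} = 0 := by
    intro ε hε
    set W : ℕ → Set E := fun N => interior {x | ∀ n ≥ N, ε/2 < F n x - J n x} with hW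
    have hWnull : ∀ N, (ξ : Measure E) (W N) = 0 := by
      intro N
      have hWopen : IsOpen (W N) := isOpen_interior
      have hle := ProbabilityMeasure.le_liminf_measure_open_of_tendsto hconv hWopen
      have hWn : ∀ n ≥ N, (ξseq n : Measure E) (W N) = 0 := by
        intro n hn
        refine measure_mono_null ?_ (hnull n)
        intro y hy
        have hy' : ε/2 < F n y - J n y := interior_subset hy n hn
        simp only [Set.mem_compl_iff, Set.mem_setOf_eq]
        intro hFJ
        rw [hFJ, sub_self] at hy'
        linarith
      have hlim0 : liminf (fun n => (ξseq n : Measure E) (W N)) atTop = 0 := by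
        have hev : ∀ᶠ n in atTop, (ξseq n : Measure E) (W N) = 0 :=
          eventually_atTop.mpr ⟨N, hWn⟩
        rw [liminf_congr hev]
        simp
      rw [hlim0] at hle
      exact le_antisymm hle zero_le
    -- {Flim - Jlim ≥ ε} ⊆ ⋃ N, W N
    have hsub : {e | ε ≤ Flim e - Jlim e} ⊆ ⋃ N, W N := by
      intro e he
      have hGe : ε ≤ Flim e - Jlim e := he
      obtain ⟨N, δ, hδ, hNδ⟩ := cc_lower_aux (fun n y => F n y - J n y)
        (fun y => Flim y - Jlim y) hGcc e (ε/2) (by linarith)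
      refine Set.mem_iUnion.mpr ⟨N, ?_⟩
      have hball : Metric.ball e δ ⊆ {x | ∀ n ≥ N, ε/2 < F n x - J n x} := by
        intro y hyball n hn
        have h2 := hNδ n hn y (Metric.mem_ball.mp hyball)
        have h3 : ε/2 ≤ (Flim e - Jlim e) - ε/2 := by linarith
        exact lt_of_le_of_lt h3 h2
      exact (Metric.isOpen_ball.subset_interior_iff.mpr hball)
        (Metric.mem_ball_self hδ)
    refine le_antisymm ?_ zero_le
    calc (ξ : Measure E) {e | ε ≤ Flim e - Jlim e} ≤ (ξ : Measure E) (⋃ N, W N) :=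
          measure_mono hsub
      _ = 0 := measure_iUnion_null hWnull
  -- the set where Flim ≠ Jlim is null
  have hne_null : (ξ : Measure E) {e | Flim e = Jlim e}ᶜ = 0 := by
    have hsub : {e | Flim e = Jlim e}ᶜ ⊆ ⋃ k : ℕ, {e | 1/(k+1) ≤ Flim e - Jlim e} := by
      intro e he
      have hne : Flim e ≠ Jlim e := he
      have hpos : 0 < Flim e - Jlim e := by
        rcases lt_or_eq_of_le (hGlim_nonneg e) with h | h
        · exact h
        · exact absurd (by linarith : Flim e = Jlim e) hne
      obtain ⟨k, hk⟩ := exists_nat_one_div_lt hpos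
      exact Set.mem_iUnion.mpr ⟨k, hk.le⟩
    refine measure_mono_null hsub (measure_iUnion_null fun k => ?_)
    exact hkey _ (by positivity)
  -- conclude
  have hms : MeasurableSet {e | Flim e = Jlim e} :=
    (isClosed_eq hFlimcont hJlimcont).measurableSet
  have h1 := measure_add_measure_compl (μ := (ξ : Measure E)) hms
  rw [hne_null, add_zero, measure_univ] at h1
  exact h1
end
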